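/- Let C ⊆ ℝ^{n+1} be a cone with vertex 0 and suppose there exist r > 0 and a continuously differentiable function u on the ball B̂_r := {x̂ ∈ ℝ^n : |x̂| < r} with u(0) = 0 such that for every x = (x̂, x^{n+1}) with |x̂| < r and |x^{n+1}| < r one has x ∈ C ⟺ x^{n+1} < u(x̂). Then C is the open half-space {(x̂,t) ∈ ℝ^n × ℝ : t < ⟨Du(0), x̂⟩}, where Du(0) is the gradient of u at 0; in particular the boundary of C is the tangent hyperplane to the graph of u at the vertex. -/

import Mathlib

open Metric

/-- `C` is a cone with vertex `x`. -/
def IsConeWithVertex {d : ℕ} (C : Set (EuclideanSpace ℝ (Fin d)))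
    (x : EuclideanSpace ℝ (Fin d)) : Prop :=
  ∀ y ∈ C, ∀ τ : ℝ, 0 < τ → x + τ • (y - x) ∈ C

/-- The point of `ℝⁿ⁺¹` with base point `xhat ∈ ℝⁿ` and last coordinate `t`. -/
def pairPoint {n : ℕ} (xhat : EuclideanSpace ℝ (Fin n)) (t : ℝ) :
    EuclideanSpace ℝ (Fin (n + 1)) :=
  WithLp.toLp 2 (Fin.snoc xhat.ofLp t)

lemma pairPoint_smul {n : ℕ} (τ : ℝ) (xh : EuclideanSpace ℝ (Fin n)) (t : ℝ) :
    τ • pairPoint xh t = pairPoint (τ • xh) (τ * t) := by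
  ext i
  refine Fin.lastCases ?_ (fun j => ?_) i <;>
    simp [pairPoint, Fin.snoc_last, Fin.snoc_castSucc, PiLp.smul_apply, smul_eq_mul]

lemma pairPoint_eta {n : ℕ} (x : EuclideanSpace ℝ (Fin (n + 1))) :
    pairPoint (WithLp.toLp 2 (fun i : Fin n => x i.castSucc)) (x (Fin.last n)) = x := by
  ext i
  refine Fin.lastCases ?_ (fun j => ?_) i <;>
    simp [pairPoint, Fin.snoc_last, Fin.snoc_castSucc]

lemma slope_tendsto_lin {n : ℕ} (xh : EuclideanSpace ℝ (Fin n))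
    (u : EuclideanSpace ℝ (Fin n) → ℝ)
    (L : EuclideanSpace ℝ (Fin n) →L[ℝ] ℝ) (hL : HasFDerivAt u L 0) (hu0 : u 0 = 0) :
    Filter.Tendsto (fun τ : ℝ => u (τ • xh) / τ) (nhdsWithin 0 (Set.Ioi 0)) (nhds (L xh)) := by
  have hinner : HasDerivAt (fun τ : ℝ => τ • xh) xh 0 := by
    simpa using (hasDerivAt_id (0:ℝ)).smul_const xh
  have hcomp : HasDerivAt (fun τ : ℝ => u (τ • xh)) (L xh) 0 := by
    have : HasFDerivAt u L ((0:ℝ) • xh) := by simpa using hL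
    exact this.comp_hasDerivAt 0 hinner
  have hs := hasDerivAt_iff_tendsto_slope.mp hcomp
  have hs' := hs.mono_left (nhdsWithin_mono 0 (fun τ hτ => ne_of_gt hτ : Set.Ioi (0:ℝ) ⊆ {0}ᶜ))
  refine hs'.congr' ?_
  filter_upwards [self_mem_nhdsWithin] with τ hτ
  simp [slope, hu0, zero_smul, sub_zero, div_eq_inv_mul]

lemma key_mem_iff {n : ℕ} (C : Set (EuclideanSpace ℝ (Fin (n + 1))))
    (hcone : IsConeWithVertex C 0) (r : ℝ) (hr : 0 < r)
    (u : EuclideanSpace ℝ (Fin n) → ℝ) (hu0 : u 0 = 0)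
    (L : EuclideanSpace ℝ (Fin n) →L[ℝ] ℝ) (hL : HasFDerivAt u L 0)
    (hrep : ∀ xhat : EuclideanSpace ℝ (Fin n), ∀ s : ℝ, ‖xhat‖ < r → |s| < r →
      (pairPoint xhat s ∈ C ↔ s < u xhat))
    (xh : EuclideanSpace ℝ (Fin n)) (t : ℝ) :
    pairPoint xh t ∈ C ↔ t < L xh := by
  set a := L xh with ha
  set g : ℝ → ℝ := fun τ => u (τ • xh) / τ with hgdef
  have hg : Filter.Tendsto g (nhdsWithin 0 (Set.Ioi 0)) (nhds a) :=
    slope_tendsto_lin xh u L hL hu0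
  have memC_iff : ∀ (y : EuclideanSpace ℝ (Fin (n + 1))) {τ : ℝ}, 0 < τ →
      (y ∈ C ↔ τ • y ∈ C) := by
    intro y τ hτ
    constructor
    · intro hy; simpa using hcone y hy τ hτ
    · intro hy
      have := hcone _ hy τ⁻¹ (inv_pos.mpr hτ)
      simpa [smul_smul, inv_mul_cancel₀ (ne_of_gt hτ)] using this
  set D := ‖xh‖ + |t| + |a| + 2 with hD
  have hD0 : 0 < D := by positivity
  have h4 : ∀ᶠ τ in nhdsWithin 0 (Set.Ioi 0), |g τ - a| < 1 := by
    filter_upwards [hg (Metric.ball_mem_nhds a one_pos)] with τ hτ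
    simpa [Real.dist_eq] using hτ
  obtain ⟨d, hd, hsub⟩ := mem_nhdsGT_iff_exists_Ioo_subset.mp h4
  set δ := min d (r / D) with hδ
  have hδpos : 0 < δ := lt_min hd (div_pos hr hD0)
  have hmem : ∀ τ ∈ Set.Ioo (0:ℝ) δ,
      τ * ‖xh‖ < r ∧ τ * |t| < r ∧ τ * (|a| + 1) < r ∧ |g τ - a| < 1 := by
    rintro τ ⟨h0, h1⟩
    have h2 : τ < r / D := lt_of_lt_of_le h1 (min_le_right _ _)
    have h3 : τ * D < r := (lt_div_iff₀ hD0).mp h2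
    refine ⟨?_, ?_, ?_, hsub ⟨h0, lt_of_lt_of_le h1 (min_le_left _ _)⟩⟩ <;>
      nlinarith [norm_nonneg xh, abs_nonneg t, abs_nonneg a]
  have hscale : ∀ τ ∈ Set.Ioo (0:ℝ) δ, ∀ s : ℝ, τ * |s| < r →
      (pairPoint xh s ∈ C ↔ τ * s < u (τ • xh)) := by
    intro τ hτ s hs
    have h := hmem τ hτ
    rw [memC_iff _ hτ.1, pairPoint_smul]
    refine hrep _ _ ?_ ?_
    · rw [norm_smul]; simpa [abs_of_pos hτ.1] using h.1
    · rwa [abs_mul, abs_of_pos hτ.1]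
  have hmono : ∀ τ ∈ Set.Ioo (0:ℝ) δ, ∀ σ ∈ Set.Ioo (0:ℝ) δ, ¬ (g σ < g τ) := by
    intro τ hτ σ hσ hlt
    set s := (g σ + g τ) / 2 with hs
    have hgτb : |g τ| < |a| + 1 := by
      have h1 := (hmem τ hτ).2.2.2
      have := abs_sub_abs_le_abs_sub (g τ) a
      linarith
    have hgσb : |g σ| < |a| + 1 := by
      have h1 := (hmem σ hσ).2.2.2
      have := abs_sub_abs_le_abs_sub (g σ) a
      linarith
    have hsb : |s| < |a| + 1 := by
      have h2 := abs_add_le (g σ) (g τ)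
      calc |s| = |g σ + g τ| / 2 := by rw [hs, abs_div]; norm_num
        _ ≤ (|g σ| + |g τ|) / 2 := by linarith
        _ < |a| + 1 := by linarith
    have hs1 : g σ < s := by rw [hs]; linarith
    have hs2 : s < g τ := by rw [hs]; linarith
    have hbτ : τ * |s| < r := by
      have := (hmem τ hτ).2.2.1
      nlinarith [abs_nonneg s, hτ.1]
    have hbσ : σ * |s| < r := by
      have := (hmem σ hσ).2.2.1
      nlinarith [abs_nonneg s, hσ.1]
    have hCin : pairPoint xh s ∈ C := by
      refine (hscale τ hτ s hbτ).mpr ?_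
      have := (lt_div_iff₀ hτ.1).mp hs2
      nlinarith
    have h5 : σ * s < u (σ • xh) := (hscale σ hσ s hbσ).mp hCin
    have : s < g σ := by
      rw [hgdef]
      exact (lt_div_iff₀ hσ.1).mpr (by nlinarith)
    linarith
  set τ₀ := δ / 2 with hτ₀
  have hτ₀mem : τ₀ ∈ Set.Ioo (0:ℝ) δ := ⟨by positivity, by rw [hτ₀]; linarith⟩
  have hgτ₀ : g τ₀ = a := by
    have hev : ∀ᶠ σ in nhdsWithin 0 (Set.Ioi 0), g τ₀ = g σ := by
      filter_upwards [Ioo_mem_nhdsGT_of_mem (show (0:ℝ) ∈ Set.Ico 0 δ from ⟨le_refl _, hδpos⟩)]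
        with σ hσ
      exact le_antisymm (not_lt.mp (hmono τ₀ hτ₀mem σ hσ)) (not_lt.mp (hmono σ hσ τ₀ hτ₀mem))
    exact tendsto_nhds_unique (Filter.Tendsto.congr' hev tendsto_const_nhds) hg
  have hb1 : τ₀ * |t| < r := (hmem τ₀ hτ₀mem).2.1
  rw [hscale τ₀ hτ₀mem t hb1]
  have huv : u (τ₀ • xh) = τ₀ * a := by
    have h := hgτ₀
    rw [hgdef] at h
    field_simp at h
    rw [div_eq_iff (ne_of_gt hτ₀mem.1)] at h
    linarith
  rw [huv, mul_lt_mul_iff_right₀ hτ₀mem.1]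

lemma frontier_halfspace_last {n : ℕ} (L : EuclideanSpace ℝ (Fin n) →L[ℝ] ℝ) :
    frontier {x : EuclideanSpace ℝ (Fin (n + 1)) |
        x (Fin.last n) < L (WithLp.toLp 2 (fun i : Fin n => x i.castSucc))} =
      {x : EuclideanSpace ℝ (Fin (n + 1)) |
        x (Fin.last n) = L (WithLp.toLp 2 (fun i : Fin n => x i.castSucc))} := by
  set S := {x : EuclideanSpace ℝ (Fin (n + 1)) |
      x (Fin.last n) < L (WithLp.toLp 2 (fun i : Fin n => x i.castSucc))} with hS
  have hf : Continuous fun x : EuclideanSpace ℝ (Fin (n + 1)) => x (Fin.last n) :=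
    (EuclideanSpace.proj (Fin.last n)).continuous
  have hg : Continuous fun x : EuclideanSpace ℝ (Fin (n + 1)) =>
      L (WithLp.toLp 2 (fun i : Fin n => x i.castSucc)) := by
    fun_prop
  have hopen : IsOpen S := isOpen_lt hf hg
  have hclos : closure S = {x : EuclideanSpace ℝ (Fin (n + 1)) |
      x (Fin.last n) ≤ L (WithLp.toLp 2 (fun i : Fin n => x i.castSucc))} := by
    apply Set.Subset.antisymm
    · refine closure_minimal (fun y hy => ?_) (isClosed_le hf hg)
      rw [hS] at hy
      exact le_of_lt (show y (Fin.last n) < L (WithLp.toLp 2 (fun i : Fin n => y i.castSucc)) from hy)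
    · intro x hx
      set e : EuclideanSpace ℝ (Fin (n + 1)) := pairPoint 0 1 with he
      have htend : Filter.Tendsto (fun ε : ℝ => x - ε • e)
          (nhdsWithin 0 (Set.Ioi 0)) (nhds x) := by
        have h1 : Filter.Tendsto (fun ε : ℝ => x - ε • e) (nhds 0) (nhds (x - (0:ℝ) • e)) :=
          tendsto_const_nhds.sub ((continuous_id.smul continuous_const).tendsto 0)
        simpa using h1.mono_left nhdsWithin_le_nhds
      refine mem_closure_of_tendsto htend ?_
      filter_upwards [self_mem_nhdsWithin] with ε hε
      have hlast : (x - ε • e) (Fin.last n) = x (Fin.last n) - ε := by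
        simp [he, pairPoint, PiLp.sub_apply, PiLp.smul_apply, Fin.snoc_last]
      have hcast : (fun i : Fin n => (x - ε • e) i.castSucc) =
          fun i : Fin n => x i.castSucc := by
        funext i
        simp [he, pairPoint, Fin.snoc_castSucc, PiLp.sub_apply, PiLp.smul_apply]
      show (x - ε • e) (Fin.last n) < L (WithLp.toLp 2 (fun i : Fin n => (x - ε • e) i.castSucc))
      rw [hlast, hcast]
      have hε' : (0:ℝ) < ε := hε
      have hx' : x (Fin.last n) ≤ L (WithLp.toLp 2 (fun i : Fin n => x i.castSucc)) := hx
      linarith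
  rw [frontier, hclos, hopen.interior_eq]
  ext x
  simp only [Set.mem_diff, Set.mem_setOf_eq, hS, not_lt]
  constructor
  · rintro ⟨h1, h2⟩; exact le_antisymm h1 h2
  · intro h; exact ⟨le_of_eq h, le_of_eq h.symm⟩

theorem cone_subgraph_of_C1_is_halfspace {n : ℕ}
    (C : Set (EuclideanSpace ℝ (Fin (n + 1))))
    (hcone : IsConeWithVertex C 0)
    (r : ℝ) (hr : 0 < r)
    (u : EuclideanSpace ℝ (Fin n) → ℝ)
    (hu : ContDiffOn ℝ 1 u (ball 0 r)) (hu0 : u 0 = 0)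
    (hrep : ∀ xhat : EuclideanSpace ℝ (Fin n), ∀ s : ℝ, ‖xhat‖ < r → |s| < r →
      (pairPoint xhat s ∈ C ↔ s < u xhat)) :
    C = {x : EuclideanSpace ℝ (Fin (n + 1)) |
          x (Fin.last n) < fderiv ℝ u 0 (WithLp.toLp 2 (fun i : Fin n => x i.castSucc))} ∧
    frontier C = {x : EuclideanSpace ℝ (Fin (n + 1)) |
          x (Fin.last n) = fderiv ℝ u 0 (WithLp.toLp 2 (fun i : Fin n => x i.castSucc))} := by
  have hdiff : DifferentiableAt ℝ u 0 :=
    (hu.differentiableOn one_ne_zero).differentiableAt (isOpen_ball.mem_nhds (mem_ball_self hr))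
  have hL : HasFDerivAt u (fderiv ℝ u 0) 0 := hdiff.hasFDerivAt
  have hCeq : C = {x : EuclideanSpace ℝ (Fin (n + 1)) |
      x (Fin.last n) < fderiv ℝ u 0 (WithLp.toLp 2 (fun i : Fin n => x i.castSucc))} := by
    ext x
    have h := key_mem_iff C hcone r hr u hu0 (fderiv ℝ u 0) hL hrep
      (WithLp.toLp 2 (fun i : Fin n => x i.castSucc)) (x (Fin.last n))
    rw [pairPoint_eta] at h
    exact h
  refine ⟨hCeq, ?_⟩
  rw [hCeq]
  exact frontier_halfspace_last (fderiv ℝ u 0)
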